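/- (Higman) Let ℤ_n (n < ω) be copies of the infinite cyclic group ℤ and let F be a free group. For every group homomorphism h : lim← *_{n<ω} ℤ_n → F there exist m < ω and a homomorphism h̄ : *_{n<m} ℤ_n → F such that h = h̄ ∘ p_m, where p_m : lim← *_{n<ω} ℤ_n → *_{n<m} ℤ_n is the canonical projection of the inverse limit to its m-th coordinate. -/
import Mathlib


open Monoid

noncomputable section
open scoped Classical

/-- The canonical bonding homomorphism `p_{mn} : *_{k<n} ℤ_k → *_{k<m} ℤ_k` for `m ≤ n`:
identity on `ℤ_k` for `k < m`, trivial on `ℤ_k` for `m ≤ k < n`. -/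
def zbond {m n : ℕ} (_ : m ≤ n) :
    CoprodI (fun _ : Fin n => Multiplicative ℤ) →* CoprodI (fun _ : Fin m => Multiplicative ℤ) :=
  CoprodI.lift fun k =>
    if h : (k : ℕ) < m then
      (CoprodI.of (M := fun _ : Fin m => Multiplicative ℤ) (i := ⟨(k : ℕ), h⟩)) else 1

/-- The inverse limit `lim← *_{n<ω} ℤ_n` of the finite free products of copies of `ℤ`
under the canonical bonding maps. -/
def ZLim : Subgroup (Π n : ℕ, CoprodI (fun _ : Fin n => Multiplicative ℤ)) where
  carrier := {x | ∀ ⦃m n : ℕ⦄ (h : m ≤ n), zbond h (x n) = x m}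
  one_mem' := by intro m n h; simp
  mul_mem' := by intro a b ha hb m n h; simp only [Pi.mul_apply, map_mul, ha h, hb h]
  inv_mem' := by intro a ha m n h; simp only [Pi.inv_apply, map_inv, ha h]

/-- The canonical projection `p_m : lim← *_{n<ω} ℤ_n → *_{k<m} ℤ_k` to the `m`-th coordinate. -/
def zProj (m : ℕ) : ZLim →* CoprodI (fun _ : Fin m => Multiplicative ℤ) :=
  (Pi.evalMonoidHom _ m).comp ZLim.subtype

/-- `δ_n ∈ lim← *_{n<ω} ℤ_n`: the element determined by the generator of the `n`-th copy of `ℤ`. -/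
def delta (n : ℕ) : ZLim :=
  ⟨fun m => if h : n < m then
      CoprodI.of (M := fun _ : Fin m => Multiplicative ℤ) (i := ⟨n, h⟩)
        (Multiplicative.ofAdd (1 : ℤ))
    else 1, by
    intro m m' h
    dsimp only
    by_cases hn : n < m'
    · rw [dif_pos hn]
      simp only [zbond, CoprodI.lift_of]
      by_cases hnm : n < m
      · rw [dif_pos hnm, dif_pos hnm]
      · rw [dif_neg hnm, dif_neg hnm, MonoidHom.one_apply]
    · rw [dif_neg hn, dif_neg (fun hc => hn (lt_of_lt_of_le hc h)), map_one]⟩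


namespace HigmanAux
open FreeGroup List

variable {α : Type*} [DecidableEq α]

/-- Non-cancellation relation on letters. -/
def NR : (α × Bool) → (α × Bool) → Prop := fun p q => ¬(p.1 = q.1 ∧ p.2 = !q.2)

lemma reduce_eq_self_of_chain' : ∀ {L : List (α × Bool)}, List.Chain' NR L →
    FreeGroup.reduce L = L := by
  intro L
  induction L with
  | nil => intro _; rfl
  | cons a L ih =>
    intro hch
    have hL : FreeGroup.reduce L = L := ih (List.isChain_cons.1 hch).2
    rw [FreeGroup.reduce.cons, hL]
    cases L with
    | nil => rfl
    | cons b L' =>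
      have hnr : NR a b := (List.isChain_cons_cons.1 hch).1
      simp only [NR] at hnr
      show (if a.1 = b.1 ∧ a.2 = !b.2 then L' else a :: b :: L') = a :: b :: L'
      rw [if_neg hnr]

lemma chain'_of_reduce_eq_self : ∀ {L : List (α × Bool)}, FreeGroup.reduce L = L →
    List.Chain' NR L := by
  intro L
  induction L with
  | nil => intro _; exact List.isChain_nil
  | cons a L ih =>
    intro hr
    have hlen : (FreeGroup.reduce L).length ≤ L.length := FreeGroup.Red.length_le reduce.red
    rw [FreeGroup.reduce.cons] at hr
    cases h : FreeGroup.reduce L with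
    | nil =>
      rw [h] at hr
      change [a] = a :: L at hr
      have : ([] : List (α × Bool)) = L := by injection hr
      subst this; exact List.isChain_singleton a
    | cons b L' =>
      rw [h] at hr hlen
      simp only at hr
      change (if a.1 = b.1 ∧ a.2 = !b.2 then L' else a :: b :: L') = a :: L at hr
      by_cases hc : a.1 = b.1 ∧ a.2 = !b.2
      · rw [if_pos hc] at hr
        have h1 := congrArg List.length hr
        simp only [List.length_cons] at h1 hlen
        omega
      · rw [if_neg hc] at hr
        have hL : L = b :: L' := by
          injection hr with _ h2
          exact h2.symm
        have hred : FreeGroup.reduce L = L := by rw [h, ← hL]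
        refine List.isChain_cons.2 ⟨?_, ih hred⟩
        intro y hy
        rw [hL] at hy
        simp at hy
        subst hy
        exact hc

lemma chain'_toWord (x : FreeGroup α) : List.Chain' NR x.toWord :=
  chain'_of_reduce_eq_self (FreeGroup.reduce_toWord x)

lemma toWord_mul_of {x y : FreeGroup α}
    (hj : ∀ p ∈ x.toWord.getLast?, ∀ q ∈ y.toWord.head?, NR p q) :
    (x * y).toWord = x.toWord ++ y.toWord := by
  have hch : List.Chain' NR (x.toWord ++ y.toWord) :=
    (chain'_toWord x).append (chain'_toWord y) hj
  have h1 : x * y = FreeGroup.mk (x.toWord ++ y.toWord) := by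
    rw [← FreeGroup.mul_mk, FreeGroup.mk_toWord, FreeGroup.mk_toWord]
  rw [h1, FreeGroup.toWord_mk, reduce_eq_self_of_chain' hch]

/-- Cyclically reduced: no cancellation between last and first letter. -/
def CyclRed (c : FreeGroup α) : Prop :=
  ∀ p ∈ c.toWord.getLast?, ∀ q ∈ c.toWord.head?, NR p q


lemma decompAux : ∀ (n : ℕ) (x : FreeGroup α), FreeGroup.norm x ≤ n → x ≠ 1 →
    ∃ u c : FreeGroup α, c ≠ 1 ∧ x = u * c * u⁻¹ ∧ CyclRed c ∧
      x.toWord = u.toWord ++ c.toWord ++ u⁻¹.toWord := by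
  intro n
  induction n with
  | zero =>
    intro x hn hx
    exact absurd (FreeGroup.norm_eq_zero.1 (Nat.le_zero.1 hn)) hx
  | succ n ih =>
    intro x hn hx
    by_cases hcr : CyclRed x
    · refine ⟨1, x, hx, by group, hcr, ?_⟩
      simp [FreeGroup.toWord_one]
    · -- extract the cancelling pair
      rw [CyclRed] at hcr
      push_neg at hcr
      obtain ⟨p, hp, q, hq, hpq⟩ := hcr
      simp only [NR, not_not] at hpq
      have hLne : x.toWord ≠ [] := by
        simpa [FreeGroup.toWord_eq_nil_iff] using hx
      obtain ⟨q', T, hLT⟩ : ∃ q' T, x.toWord = q' :: T := by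
        cases hL : x.toWord with
        | nil => exact absurd hL hLne
        | cons a t => exact ⟨a, t, rfl⟩
      have hqq : q' = q := by
        rw [hLT] at hq
        simp only [List.head?_cons, Option.mem_def, Option.some.injEq] at hq
        exact hq
      subst hqq
      obtain ⟨M', hM'⟩ : ∃ M', x.toWord = M' ++ [p] := by
        refine ⟨x.toWord.dropLast, (List.dropLast_append_getLast? p hp).symm⟩
      have hTne : T ≠ [] := by
        intro hT
        rw [hLT, hT] at hM'
        cases M' with
        | nil =>
          simp only [List.nil_append, List.cons.injEq] at hM'
          rw [hM'.1] at hpq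
          simp at hpq
        | cons a l =>
          have := congrArg List.length hM'
          simp at this
      obtain ⟨q2, M, hM2⟩ : ∃ q2 M, M' = q2 :: M := by
        cases hM : M' with
        | nil =>
          rw [hM, hLT] at hM'
          simp only [List.nil_append, List.cons.injEq] at hM'
          exact absurd hM'.2 (by simpa using hTne)
        | cons a t => exact ⟨a, t, rfl⟩
      rw [hM2] at hM'
      rw [hLT] at hM'
      have hq2 : q2 = q' := by injection hM' with h1 _; exact h1.symm
      rw [hq2] at hM'
      have hTM : T = M ++ [p] := by injection hM' with _ h2
      -- pieces
      have hchL : List.Chain' NR x.toWord := chain'_toWord x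
      rw [hLT, hTM] at hchL
      have hchMp : List.Chain' NR (M ++ [p]) := (List.isChain_cons.1 hchL).2
      have hjq : ∀ r ∈ (M ++ [p]).head?, NR q' r := (List.isChain_cons.1 hchL).1
      have hchM : List.Chain' NR M := (List.isChain_append.1 hchMp).1
      have hjMp : ∀ r ∈ M.getLast?, ∀ s ∈ ([p] : List (α × Bool)).head?, NR r s :=
        (List.isChain_append.1 hchMp).2.2
      have hMne : M ≠ [] := by
        intro hM0
        rw [hM0] at hchL
        simp only [List.nil_append] at hchL
        have := (List.isChain_cons_cons.1 hchL).1
        exact this ⟨hpq.1.symm, by rw [hpq.2]; simp⟩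
      -- the inner element y
      set y : FreeGroup α := FreeGroup.mk M with hy
      have hyW : y.toWord = M := by
        rw [hy, FreeGroup.toWord_mk, reduce_eq_self_of_chain' hchM]
      have hyne : y ≠ 1 := by
        intro h0
        apply hMne
        rw [← hyW, h0, FreeGroup.toWord_one]
      have hylen : FreeGroup.norm y ≤ n := by
        have h1 : FreeGroup.norm x = M.length + 2 := by
          rw [FreeGroup.norm, hLT, hTM]
          simp
        have h2 : FreeGroup.norm y = M.length := by rw [FreeGroup.norm, hyW]
        omega
      obtain ⟨u', c, hc1, hxy, hccr, hW⟩ := ih y hylen hyne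
      rw [hyW] at hW
      -- p is the formal inverse of q
      have hpq' : p = (q'.1, !q'.2) := by
        rcases p with ⟨p1, p2⟩; rcases q' with ⟨q1', q2'⟩
        simp only at hpq
        simp [hpq.1, hpq.2]
      set t : FreeGroup α := FreeGroup.mk [q'] with ht
      have htinv : t⁻¹ = FreeGroup.mk [p] := by
        rw [ht, FreeGroup.inv_mk, FreeGroup.invRev, hpq']
        simp
      refine ⟨t * u', c, hc1, ?_, hccr, ?_⟩
      · -- x = (t * u') * c * (t * u')⁻¹
        have hxL : x = t * y * t⁻¹ := by
          rw [htinv, ht, hy, FreeGroup.mul_mk, FreeGroup.mul_mk]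
          conv_lhs => rw [← FreeGroup.mk_toWord (x := x)]
          rw [hLT, hTM]
          exact congrArg FreeGroup.mk (by simp)
        rw [hxL, hxy]
        group
      · -- word equality
        have hu'pre : (t * u').toWord = q' :: u'.toWord := by
          have h1 : t * u' = FreeGroup.mk ([q'] ++ u'.toWord) := by
            rw [← FreeGroup.mul_mk, ht, FreeGroup.mk_toWord]
          rw [h1, FreeGroup.toWord_mk]
          apply reduce_eq_self_of_chain'
          refine List.isChain_cons.2 ⟨?_, chain'_toWord u'⟩
          intro r hr
          apply hjq
          rw [hW]
          have hr' : r ∈ u'.toWord.head? := by simpa using hr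
          exact List.mem_head?_append_of_mem_head?
            (List.mem_head?_append_of_mem_head? (List.mem_head?_append_of_mem_head? hr'))
        have hu'inv : ((t * u')⁻¹).toWord = u'⁻¹.toWord ++ [p] := by
          have h1 : (t * u')⁻¹ = u'⁻¹ * t⁻¹ := by group
          have h2 : u'⁻¹ * t⁻¹ = FreeGroup.mk (u'⁻¹.toWord ++ [p]) := by
            rw [htinv, ← FreeGroup.mul_mk, FreeGroup.mk_toWord]
          rw [h1, h2, FreeGroup.toWord_mk]
          apply reduce_eq_self_of_chain'
          refine (chain'_toWord u'⁻¹).append (List.isChain_singleton p) ?_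
          intro r hr s hs
          apply hjMp
          · rw [hW]
            exact List.mem_getLast?_append_of_mem_getLast? hr
          · exact hs
        rw [hu'pre, hu'inv, hLT, hTM, hW]
        simp


lemma conjpow {G : Type*} [Group G] (u c : G) (d : ℕ) : (u * c * u⁻¹) ^ d = u * c ^ d * u⁻¹ := by
  induction d with
  | zero => simp
  | succ d ihd => rw [pow_succ, pow_succ, ihd]; group

lemma pow_word (c : FreeGroup α) (hc : c ≠ 1) (hcr : CyclRed c) :
    ∀ d : ℕ, 1 ≤ d → (c ^ d).toWord.head? = c.toWord.head? ∧
      (c ^ d).toWord.getLast? = c.toWord.getLast? ∧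
      FreeGroup.norm (c ^ d) = d * FreeGroup.norm c := by
  intro d
  induction d with
  | zero => intro h; omega
  | succ d ihd =>
    intro _
    by_cases hd : 1 ≤ d
    · obtain ⟨ih1, ih2, ih3⟩ := ihd hd
      have hcne : c.toWord ≠ [] := fun h0 => hc (FreeGroup.toWord_eq_nil_iff.1 h0)
      have hnormc : 1 ≤ FreeGroup.norm c := by
        rw [FreeGroup.norm]
        exact List.length_pos_iff.2 hcne
      have hcdne : (c ^ d).toWord ≠ [] := by
        have : 1 ≤ FreeGroup.norm (c ^ d) := by
          rw [ih3]
          exact Nat.one_le_iff_ne_zero.2 (by positivity)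
        rw [FreeGroup.norm] at this
        exact List.ne_nil_of_length_pos this
      have hcd : c ^ (d + 1) = c * c ^ d := by
        rw [pow_succ']
      have hmul : (c ^ (d + 1)).toWord = c.toWord ++ (c ^ d).toWord := by
        rw [hcd]
        refine toWord_mul_of ?_
        intro pp hpp qq hqq
        rw [ih1] at hqq
        exact hcr pp hpp qq hqq
      refine ⟨?_, ?_, ?_⟩
      · rw [hmul, List.head?_append_of_ne_nil _ hcne]
      · rw [hmul, List.getLast?_append_of_ne_nil _ hcdne, ih2]
      · rw [FreeGroup.norm, hmul, List.length_append, ← FreeGroup.norm, ← FreeGroup.norm,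
          ih3]
        ring
    · have hd0 : d = 0 := by omega
      subst hd0
      simp [FreeGroup.norm]

lemma norm_pow_bounds (x : FreeGroup α) (hx : x ≠ 1) (d : ℕ) (hd : 1 ≤ d) :
    d ≤ FreeGroup.norm (x ^ d) ∧ FreeGroup.norm x ≤ FreeGroup.norm (x ^ d) := by
  obtain ⟨u, c, hc1, hxe, hcr, hw⟩ := decompAux (FreeGroup.norm x) x le_rfl hx
  obtain ⟨h1, h2, h3⟩ := pow_word c hc1 hcr d hd
  have hBne : c.toWord ≠ [] := fun h0 => hc1 (FreeGroup.toWord_eq_nil_iff.1 h0)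
  have hnormc : 1 ≤ FreeGroup.norm c := by
    rw [FreeGroup.norm]; exact List.length_pos_iff.2 hBne
  have hcdne : (c ^ d).toWord ≠ [] := by
    have : 1 ≤ FreeGroup.norm (c ^ d) := by rw [h3]; nlinarith
    rw [FreeGroup.norm] at this
    exact List.ne_nil_of_length_pos this
  have hch : List.Chain' NR (u.toWord ++ c.toWord ++ u⁻¹.toWord) := hw ▸ chain'_toWord x
  have cAB : List.Chain' NR (u.toWord ++ c.toWord) := (List.isChain_append.1 hch).1
  have j1 : ∀ p ∈ (u.toWord ++ c.toWord).getLast?, ∀ q ∈ u⁻¹.toWord.head?, NR p q :=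
    (List.isChain_append.1 hch).2.2
  have j2 : ∀ p ∈ u.toWord.getLast?, ∀ q ∈ c.toWord.head?, NR p q :=
    (List.isChain_append.1 cAB).2.2
  have hlastAB : (u.toWord ++ c.toWord).getLast? = c.toWord.getLast? :=
    List.getLast?_append_of_ne_nil _ hBne
  have hcdu : (c ^ d * u⁻¹).toWord = (c ^ d).toWord ++ u⁻¹.toWord := by
    refine toWord_mul_of ?_
    intro pp hpp qq hqq
    refine j1 pp ?_ qq hqq
    rw [hlastAB, ← h2]
    exact hpp
  have hfull : (x ^ d).toWord = u.toWord ++ ((c ^ d).toWord ++ u⁻¹.toWord) := by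
    have hxd : x ^ d = u * (c ^ d * u⁻¹) := by
      rw [hxe, conjpow, mul_assoc]
    rw [hxd, toWord_mul_of ?_, hcdu]
    intro pp hpp qq hqq
    rw [hcdu, List.head?_append_of_ne_nil _ hcdne, h1] at hqq
    exact j2 pp hpp qq hqq
  have e1 : FreeGroup.norm (x ^ d) =
      u.toWord.length + (d * FreeGroup.norm c + u⁻¹.toWord.length) := by
    rw [FreeGroup.norm, hfull]
    simp [List.length_append]
    rw [← FreeGroup.norm, h3]
  have e2 : FreeGroup.norm x = u.toWord.length + (FreeGroup.norm c + u⁻¹.toWord.length) := by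
    rw [FreeGroup.norm, hw]
    simp [List.length_append]
    rfl
  constructor
  · nlinarith
  · nlinarith

end HigmanAux

namespace HigmanZ

lemma zmem {x : Π n : ℕ, CoprodI (fun _ : Fin n => Multiplicative ℤ)} (hx : x ∈ ZLim)
    {m n : ℕ} (h : m ≤ n) : zbond h (x n) = x m := hx h

lemma zmem' (x : ZLim) {m n : ℕ} (h : m ≤ n) : zbond h (x.val n) = x.val m := x.2 h

lemma zProj_apply (m : ℕ) (x : ZLim) : zProj m x = x.val m := rfl

lemma val_eq_one_of_le {x : ZLim} {N : ℕ} (hx : zProj N x = 1) {m : ℕ} (h : m ≤ N) :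
    x.val m = 1 := by
  have := zmem' x h
  rw [zProj_apply] at hx
  rw [hx, map_one] at this
  exact this.symm

/-- Nested power products: `prodAux g d f N` is the `f`-fold truncation of the infinite
nested product `(g N · (g (N+1) · ( ⋯ )^(d (N+1)))^(d N)`. -/
def prodAux (g : ℕ → ZLim) (d : ℕ → ℕ) : ℕ → ℕ → ZLim
  | 0, _ => 1
  | (f+1), N => (g N * prodAux g d f (N+1)) ^ (d N)

variable {g : ℕ → ZLim} {d : ℕ → ℕ}

lemma prodAux_val_one (hg : ∀ N, zProj N (g N) = 1) (fuel : ℕ) : ∀ N m : ℕ, m ≤ N →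
    (prodAux g d fuel N).val m = 1 := by
  induction fuel with
  | zero => intro N m _; rfl
  | succ f ih =>
    intro N m hm
    show ((g N * prodAux g d f (N+1)) ^ (d N)).val m = 1
    rw [SubmonoidClass.coe_pow, Pi.pow_apply, Subgroup.coe_mul, Pi.mul_apply,
      val_eq_one_of_le (hg N) hm, ih (N+1) m (by omega), one_mul, one_pow]

lemma prodAux_val_stab (hg : ∀ N, zProj N (g N) = 1) :
    ∀ (f f' N m : ℕ), m - N ≤ f → m - N ≤ f' →
    (prodAux g d f N).val m = (prodAux g d f' N).val m := by
  intro f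
  induction f with
  | zero =>
    intro f' N m hf hf'
    rw [prodAux_val_one hg 0 N m (by omega), prodAux_val_one hg f' N m (by omega)]
  | succ f ih =>
    intro f' N m hf hf'
    by_cases hm : m ≤ N
    · rw [prodAux_val_one hg _ N m hm, prodAux_val_one hg f' N m hm]
    · cases f' with
      | zero => omega
      | succ f'' =>
        show ((g N * prodAux g d f (N+1)) ^ (d N)).val m =
          ((g N * prodAux g d f'' (N+1)) ^ (d N)).val m
        rw [SubmonoidClass.coe_pow, Pi.pow_apply, Subgroup.coe_mul, Pi.mul_apply,
          SubmonoidClass.coe_pow, Pi.pow_apply, Subgroup.coe_mul, Pi.mul_apply,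
          ih f'' (N+1) m (by omega) (by omega)]

/-- The infinite nested product `(g N · (g (N+1) · ( ⋯ )^(d(N+1)))^(d N)` as an element
of the inverse limit. -/
def wseq (g : ℕ → ZLim) (d : ℕ → ℕ) (hg : ∀ N, zProj N (g N) = 1) (N : ℕ) : ZLim :=
  ⟨fun m => (prodAux g d (m - N) N).val m, by
    intro m n hmn
    dsimp only
    rw [zmem' (prodAux g d (n - N) N) hmn]
    exact prodAux_val_stab hg (n - N) (m - N) N m (by omega) (by omega)⟩

lemma wseq_rec (hg : ∀ N, zProj N (g N) = 1) (N : ℕ) : wseq g d hg N = (g N * wseq g d hg (N+1)) ^ (d N) := by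
  apply Subtype.ext
  funext m
  show (prodAux g d (m - N) N).val m = _
  rw [SubmonoidClass.coe_pow, Pi.pow_apply, Subgroup.coe_mul, Pi.mul_apply]
  by_cases hm : m ≤ N
  · rw [prodAux_val_one hg _ N m hm, val_eq_one_of_le (hg N) hm]
    show _ = (1 * (prodAux g d (m - (N+1)) (N+1)).val m) ^ (d N)
    rw [prodAux_val_one hg _ (N+1) m (by omega), one_mul, one_pow]
  · have hmN : m - N = (m - (N+1)) + 1 := by omega
    rw [hmN]
    show ((g N * prodAux g d (m - (N+1)) (N+1)) ^ (d N)).val m = _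
    rw [SubmonoidClass.coe_pow, Pi.pow_apply, Subgroup.coe_mul, Pi.mul_apply]
    rfl

end HigmanZ


/-- **Higman's theorem**: every homomorphism `h : lim← *_{n<ω} ℤ_n → F` to a free group
factors through the canonical projection `p_m` to a finite free product `*_{n<m} ℤ_n`. -/
theorem higman {α : Type*} (h : ZLim →* FreeGroup α) :
    ∃ (m : ℕ) (hbar : CoprodI (fun _ : Fin m => Multiplicative ℤ) →* FreeGroup α),
      h = hbar.comp (zProj m) := by
  classical
  suffices hker : ∃ m : ℕ, ∀ x : ZLim, zProj m x = 1 → h x = 1 by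
    obtain ⟨m, hm⟩ := hker
    set sect : CoprodI (fun _ : Fin m => Multiplicative ℤ) →* ZLim :=
      CoprodI.lift (fun k : Fin m => zpowersHom ZLim (delta (k : ℕ))) with hsect
    have hps : ∀ w, zProj m (sect w) = w := by
      intro w
      have hhom : (zProj m).comp sect = MonoidHom.id _ := by
        apply CoprodI.ext_hom
        intro i
        apply MonoidHom.ext_mint
        simp only [MonoidHom.comp_apply, MonoidHom.coe_comp, Function.comp_apply,
          MonoidHom.id_apply, hsect, CoprodI.lift_of, zpowersHom_apply, toAdd_ofAdd,
          zpow_one]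
        show (delta (i : ℕ)).val m = _
        rw [delta]
        simp only [dif_pos i.isLt, Fin.eta]
      calc zProj m (sect w) = ((zProj m).comp sect) w := rfl
        _ = w := by rw [hhom]; rfl
    refine ⟨m, h.comp sect, ?_⟩
    ext x
    have hx1 : zProj m (x * (sect (zProj m x))⁻¹) = 1 := by
      rw [map_mul, map_inv, hps, mul_inv_cancel]
    have hx2 := hm _ hx1
    rw [map_mul, map_inv, mul_inv_eq_one] at hx2
    simpa using hx2
  by_contra hcon
  push_neg at hcon
  choose g hg1 hg2 using hcon
  letI : DecidableEq α := Classical.decEq α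
  set a : ℕ → FreeGroup α := fun N => h (g N) with ha
  set d : ℕ → ℕ :=
    fun N => N + 1 + (Finset.range N).sum (fun i => FreeGroup.norm (a i) + 1) with hd
  have hd1 : ∀ N, 1 ≤ d N := by intro N; simp only [hd]; omega
  have hdgrow : ∀ N, FreeGroup.norm (a N) + 1 ≤ d (N + 1) := by
    intro N
    simp only [hd, Finset.sum_range_succ]
    omega
  have hdbig : ∀ N,
      2 * N + 1 + (Finset.range N).sum (fun i => FreeGroup.norm (a i)) ≤ d N := by
    intro N
    simp only [hd, Finset.sum_add_distrib, Finset.sum_const, Finset.card_range,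
      smul_eq_mul, mul_one]
    omega
  set b : ℕ → FreeGroup α := fun N => h (HigmanZ.wseq g d hg1 N) with hb
  have hrec : ∀ N, b N = (a N * b (N + 1)) ^ (d N) := by
    intro N
    simp only [hb, ha]
    rw [HigmanZ.wseq_rec hg1 N, map_pow, map_mul]
  have hBexists : ∃ N, b N = 1 := by
    by_contra hB
    push_neg at hB
    have hne : ∀ N, a N * b (N + 1) ≠ 1 := by
      intro N h0
      apply hB N
      rw [hrec N, h0, one_pow]
    have hub : ∀ N, FreeGroup.norm (b N) ≤ FreeGroup.norm (b 0)
        + (Finset.range N).sum (fun i => FreeGroup.norm (a i)) := by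
      intro N
      induction N with
      | zero => simp
      | succ N ihN =>
        have h1 : FreeGroup.norm (a N * b (N + 1)) ≤ FreeGroup.norm (b N) := by
          rw [hrec N]
          exact (HigmanAux.norm_pow_bounds _ (hne N) (d N) (hd1 N)).2
        have h2 : FreeGroup.norm (b (N + 1)) ≤
            FreeGroup.norm (a N) + FreeGroup.norm (a N * b (N + 1)) := by
          have hsplit : b (N + 1) = (a N)⁻¹ * (a N * b (N + 1)) := by group
          calc FreeGroup.norm (b (N + 1))
              = FreeGroup.norm ((a N)⁻¹ * (a N * b (N + 1))) := by rw [← hsplit]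
            _ ≤ FreeGroup.norm (a N)⁻¹ + FreeGroup.norm (a N * b (N + 1)) :=
                FreeGroup.norm_mul_le _ _
            _ = FreeGroup.norm (a N) + FreeGroup.norm (a N * b (N + 1)) := by
                rw [FreeGroup.norm_inv_eq]
        rw [Finset.sum_range_succ]
        omega
    have hlb : ∀ N, d N ≤ FreeGroup.norm (b N) := by
      intro N
      rw [hrec N]
      exact (HigmanAux.norm_pow_bounds _ (hne N) (d N) (hd1 N)).1
    have hfin : ∀ N, 2 * N + 1 ≤ FreeGroup.norm (b 0) := by
      intro N
      have t1 := hdbig N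
      have t2 := hlb N
      have t3 := hub N
      omega
    have := hfin (FreeGroup.norm (b 0))
    omega
  obtain ⟨N, hN⟩ := hBexists
  have hc1 : a N * b (N + 1) = 1 := by
    by_contra hc
    have h1 := (HigmanAux.norm_pow_bounds _ hc (d N) (hd1 N)).1
    rw [← hrec N, hN, FreeGroup.norm_one] at h1
    have := hd1 N
    omega
  have hbn1 : b (N + 1) = (a N)⁻¹ := eq_inv_of_mul_eq_one_right hc1
  have haN : a N ≠ 1 := hg2 N
  have hbN1ne : b (N + 1) ≠ 1 := by
    rw [hbn1]
    exact inv_ne_one.2 haN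
  have hc2 : a (N + 1) * b (N + 2) ≠ 1 := by
    intro h0
    apply hbN1ne
    rw [hrec (N + 1), h0, one_pow]
  have hlow : d (N + 1) ≤ FreeGroup.norm (b (N + 1)) := by
    rw [hrec (N + 1)]
    exact (HigmanAux.norm_pow_bounds _ hc2 (d (N + 1)) (hd1 (N + 1))).1
  rw [hbn1, FreeGroup.norm_inv_eq] at hlow
  have := hdgrow N
  omega

end
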